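/- arXiv:math/9412225 — 2 statements merged into one kernel-verified Lean document; each statement's English description precedes it below -/
import Mathlib

section
/- For 0<q<1 and any complex z, the basic hypergeometric series ${}_0\varphi_0(-;-;q,z) = \sum_{k=0}^\infty \frac{(-1)^k q^{k(k-1)/2}}{(q;q)_k} z^k$ equals the infinite product $(z;q)_\infty = \prod_{i=0}^\infty (1 - z q^i)$. -/
open Complex Filter Topology

set_option maxHeartbeats 1000000

/-- The finite q-shifted factorial `(a;q)_k`. -/
noncomputable def qp (a q : ℂ) (k : ℕ) : ℂ := ∏ i ∈ Finset.range k, (1 - a * q ^ i)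

/-- The infinite q-shifted factorial `(a;q)_∞`. -/
noncomputable def qpi (a q : ℂ) : ℂ := ∏' i : ℕ, (1 - a * q ^ i)

/-- The `k`-th term of the series `₀φ₀`. -/
noncomputable def tt (q : ℝ) (z : ℂ) (k : ℕ) : ℂ :=
  ((-1) ^ k * (q : ℂ) ^ (k * (k - 1) / 2) / qp q q k) * z ^ k

lemma qp_succ (a q : ℂ) (k : ℕ) : qp a q (k + 1) = qp a q k * (1 - a * q ^ k) :=
  Finset.prod_range_succ _ _

lemma one_sub_pow_ne {q : ℝ} (hq : 0 < q) (hq1 : q < 1) (k : ℕ) :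
    (1 : ℂ) - (q : ℂ) ^ (k + 1) ≠ 0 := by
  have h : (0 : ℝ) < 1 - q ^ (k + 1) := by
    have : q ^ (k + 1) < 1 := pow_lt_one₀ hq.le hq1 (Nat.succ_ne_zero k)
    linarith
  have he : (1 : ℂ) - (q : ℂ) ^ (k + 1) = ((1 - q ^ (k + 1) : ℝ) : ℂ) := by push_cast; ring
  rw [he]
  exact_mod_cast h.ne'

lemma qp_q_ne {q : ℝ} (hq : 0 < q) (hq1 : q < 1) (k : ℕ) : qp q q k ≠ 0 := by
  rw [qp, Finset.prod_ne_zero_iff]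
  intro i _
  have he : (1 : ℂ) - (q : ℂ) * (q : ℂ) ^ i = 1 - (q : ℂ) ^ (i + 1) := by rw [pow_succ]; ring
  rw [he]
  exact one_sub_pow_ne hq hq1 i

lemma exp_succ (k : ℕ) : (k + 1) * ((k + 1) - 1) / 2 = k * (k - 1) / 2 + k := by
  cases k with
  | zero => rfl
  | succ n =>
    obtain ⟨m, hm⟩ := Nat.even_mul_succ_self n
    have h1 : (n + 1 + 1) * ((n + 1 + 1) - 1) = (m + m) + 2 * (n + 1) := by
      have : (n + 1 + 1) * ((n + 1 + 1) - 1) = n * (n + 1) + 2 * (n + 1) := by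
        simp only [Nat.add_sub_cancel]; ring
      rw [this, hm]
    have h2 : (n + 1) * ((n + 1) - 1) = m + m := by
      simp only [Nat.add_sub_cancel]
      rw [Nat.mul_comm]; exact hm
    omega

lemma tt_succ {q : ℝ} (hq : 0 < q) (hq1 : q < 1) (z : ℂ) (k : ℕ) :
    tt q z (k + 1) = tt q z k * (-((q : ℂ) ^ k) * z / (1 - (q : ℂ) ^ (k + 1))) := by
  have hqp := qp_q_ne hq hq1 k
  have hne := one_sub_pow_ne hq hq1 k
  have hqq : (1 : ℂ) - (q : ℂ) * (q : ℂ) ^ k = 1 - (q : ℂ) ^ (k + 1) := by rw [pow_succ]; ring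
  simp only [tt, qp_succ, exp_succ, hqq, pow_add]
  field_simp

lemma tt_qmul (q : ℝ) (z : ℂ) (k : ℕ) :
    tt q ((q : ℂ) * z) k = (q : ℂ) ^ k * tt q z k := by
  simp only [tt, mul_pow]; ring

lemma tt_rec {q : ℝ} (hq : 0 < q) (hq1 : q < 1) (z : ℂ) (k : ℕ) :
    tt q z (k + 1) - tt q ((q : ℂ) * z) (k + 1) = -(z * tt q ((q : ℂ) * z) k) := by
  have hne := one_sub_pow_ne hq hq1 k
  rw [tt_qmul q z (k + 1), tt_qmul q z k, tt_succ hq hq1 z k]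
  field_simp
  ring

lemma tt_summable {q : ℝ} (hq : 0 < q) (hq1 : q < 1) (z : ℂ) : Summable (tt q z) := by
  apply summable_of_ratio_norm_eventually_le (r := 1 / 2) (by norm_num)
  have hq' : (0 : ℝ) < 1 - q := by linarith
  have h0 : Tendsto (fun n : ℕ => q ^ n * (‖z‖ / (1 - q))) atTop (𝓝 0) := by
    simpa using (tendsto_pow_atTop_nhds_zero_of_lt_one hq.le hq1).mul_const (‖z‖ / (1 - q))
  filter_upwards [h0.eventually_le_const (by norm_num : (0 : ℝ) < 1 / 2)] with n hn
  have hfac : (0 : ℝ) < 1 - q ^ (n + 1) := by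
    have : q ^ (n + 1) < 1 := pow_lt_one₀ hq.le hq1 (Nat.succ_ne_zero n)
    linarith
  have hnorm : ‖tt q z (n + 1)‖ = ‖tt q z n‖ * (q ^ n * ‖z‖ / (1 - q ^ (n + 1))) := by
    have h1 : (1 : ℂ) - (q : ℂ) ^ (n + 1) = ((1 - q ^ (n + 1) : ℝ) : ℂ) := by push_cast; ring
    rw [tt_succ hq hq1 z n, h1, norm_mul, norm_div, norm_mul, norm_neg, norm_pow,
      Complex.norm_real, Complex.norm_real, Real.norm_eq_abs, Real.norm_eq_abs,
      abs_of_pos hq, abs_of_pos hfac]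
  rw [hnorm]
  have hratio : q ^ n * ‖z‖ / (1 - q ^ (n + 1)) ≤ 1 / 2 := by
    calc q ^ n * ‖z‖ / (1 - q ^ (n + 1)) ≤ q ^ n * ‖z‖ / (1 - q) := by
          apply div_le_div_of_nonneg_left (by positivity) hq'
          have : q ^ (n + 1) ≤ q := by
            calc q ^ (n + 1) ≤ q ^ 1 := pow_le_pow_of_le_one hq.le hq1.le (by omega)
              _ = q := pow_one q
          linarith
      _ = q ^ n * (‖z‖ / (1 - q)) := by ring
      _ ≤ 1 / 2 := hn
  calc ‖tt q z n‖ * (q ^ n * ‖z‖ / (1 - q ^ (n + 1))) ≤ ‖tt q z n‖ * (1 / 2) :=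
        mul_le_mul_of_nonneg_left hratio (norm_nonneg _)
    _ = 1 / 2 * ‖tt q z n‖ := by ring

lemma funceq {q : ℝ} (hq : 0 < q) (hq1 : q < 1) (z : ℂ) :
    (∑' k, tt q z k) = (1 - z) * ∑' k, tt q ((q : ℂ) * z) k := by
  have hs1 := tt_summable hq hq1 z
  have hs2 := tt_summable hq hq1 ((q : ℂ) * z)
  have h3 : Summable (fun k => tt q z k - tt q ((q : ℂ) * z) k) := hs1.sub hs2
  have h4 : (∑' k, (tt q z k - tt q ((q : ℂ) * z) k)) = ∑' k, -(z * tt q ((q : ℂ) * z) k) := by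
    rw [Summable.tsum_eq_zero_add h3]
    have h0 : tt q z 0 - tt q ((q : ℂ) * z) 0 = 0 := by simp [tt, qp]
    rw [h0, zero_add]
    exact tsum_congr fun k => tt_rec hq hq1 z k
  have h5 : (∑' k, tt q z k) - (∑' k, tt q ((q : ℂ) * z) k)
      = -(z * ∑' k, tt q ((q : ℂ) * z) k) := by
    rw [← Summable.tsum_sub hs1 hs2, h4, tsum_neg, tsum_mul_left]
  linear_combination h5

lemma iter {q : ℝ} (hq : 0 < q) (hq1 : q < 1) (z : ℂ) (n : ℕ) :
    (∑' k, tt q z k) = qp z q n * ∑' k, tt q ((q : ℂ) ^ n * z) k := by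
  induction n with
  | zero => simp [qp]
  | succ n ih =>
    rw [ih, funceq hq hq1 ((q : ℂ) ^ n * z), qp_succ]
    have harg : (q : ℂ) * ((q : ℂ) ^ n * z) = (q : ℂ) ^ (n + 1) * z := by rw [pow_succ]; ring
    rw [harg]
    ring

lemma F_sub_one {q : ℝ} (hq : 0 < q) (hq1 : q < 1) {w : ℂ} (hw : ‖w‖ ≤ 1) :
    ‖(∑' k, tt q w k) - 1‖ ≤ (∑' k, ‖tt q (1 : ℂ) (k + 1)‖) * ‖w‖ := by
  have hs := tt_summable hq hq1 w
  have hs1 := tt_summable hq hq1 (1 : ℂ)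
  have hsn : Summable (fun k => ‖tt q w k‖) := summable_norm_iff.mpr hs
  have hsn1 : Summable (fun k => ‖tt q (1 : ℂ) k‖) := summable_norm_iff.mpr hs1
  have hsn' : Summable (fun k => ‖tt q w (k + 1)‖) := (summable_nat_add_iff 1).mpr hsn
  have hsn1' : Summable (fun k => ‖tt q (1 : ℂ) (k + 1)‖) := (summable_nat_add_iff 1).mpr hsn1
  have h0 : tt q w 0 = 1 := by simp [tt, qp]
  have h1 : (∑' k, tt q w k) - 1 = ∑' k, tt q w (k + 1) := by
    rw [Summable.tsum_eq_zero_add hs, h0]; ring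
  rw [h1]
  calc ‖∑' k, tt q w (k + 1)‖ ≤ ∑' k, ‖tt q w (k + 1)‖ := norm_tsum_le_tsum_norm hsn'
    _ ≤ ∑' k, ‖tt q (1 : ℂ) (k + 1)‖ * ‖w‖ := by
        apply Summable.tsum_le_tsum _ hsn' (hsn1'.mul_right _)
        intro k
        have he : ‖tt q w (k + 1)‖ = ‖tt q (1 : ℂ) (k + 1)‖ * ‖w‖ ^ (k + 1) := by
          simp [tt, norm_mul, norm_pow]
        rw [he]
        have hp : ‖w‖ ^ (k + 1) ≤ ‖w‖ := pow_le_of_le_one (norm_nonneg _) hw (Nat.succ_ne_zero k)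
        exact mul_le_mul_of_nonneg_left hp (norm_nonneg _)
    _ = (∑' k, ‖tt q (1 : ℂ) (k + 1)‖) * ‖w‖ := tsum_mul_right

lemma hasProd_qpi {q : ℝ} (hq : 0 < q) (hq1 : q < 1) (z : ℂ) :
    HasProd (fun i : ℕ => 1 - z * (q : ℂ) ^ i) (qpi z q) := by
  by_cases hz : ∀ i : ℕ, 1 - z * (q : ℂ) ^ i ≠ 0
  · have hm : Multipliable (fun i : ℕ => 1 - z * (q : ℂ) ^ i) := by
      have hs : Summable (fun i : ℕ => ‖-(z * (q : ℂ) ^ i)‖) := by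
        refine ((summable_geometric_of_lt_one hq.le hq1).mul_left ‖z‖).congr fun i => ?_
        rw [norm_neg, norm_mul, norm_pow, Complex.norm_real, Real.norm_eq_abs, abs_of_pos hq]
      have h := _root_.multipliable_one_add_of_summable hs
      convert h using 1
      funext i
      ring
    simpa [qpi] using hm.hasProd
  · push_neg at hz
    obtain ⟨i₀, hi₀⟩ := hz
    have hp : HasProd (fun i : ℕ => 1 - z * (q : ℂ) ^ i) 0 := by
      rw [HasProd]
      have he : (fun _ : Finset ℕ => (0 : ℂ))
          =ᶠ[atTop] fun s : Finset ℕ => ∏ i ∈ s, (1 - z * (q : ℂ) ^ i) := by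
        filter_upwards [eventually_ge_atTop ({i₀} : Finset ℕ)] with s hs
        exact (Finset.prod_eq_zero (hs (Finset.mem_singleton_self i₀)) hi₀).symm
      exact tendsto_const_nhds.congr' he
    have h0 : qpi z q = 0 := hp.tprod_eq
    rw [h0]
    exact hp

/-- For `0 < q < 1` and any complex `z`, the series `₀φ₀(-;-;q,z)` equals `(z;q)_∞`. -/
theorem stmt0 (q : ℝ) (hq : 0 < q) (hq1 : q < 1) (z : ℂ) :
    ∑' k : ℕ, ((-1) ^ k * (q : ℂ) ^ (k * (k - 1) / 2) / qp q q k) * z ^ k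
      = qpi z q := by
  have hpow : Tendsto (fun n : ℕ => ‖(q : ℂ) ^ n * z‖) atTop (𝓝 0) := by
    have h1 : Tendsto (fun n : ℕ => q ^ n * ‖z‖) atTop (𝓝 0) := by
      simpa using (tendsto_pow_atTop_nhds_zero_of_lt_one hq.le hq1).mul_const ‖z‖
    refine h1.congr fun n => ?_
    rw [norm_mul, norm_pow, Complex.norm_real, Real.norm_eq_abs, abs_of_pos hq]
  have hF1 : Tendsto (fun n : ℕ => ∑' k, tt q ((q : ℂ) ^ n * z) k) atTop (𝓝 1) := by
    rw [← tendsto_sub_nhds_zero_iff]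
    have hg : Tendsto (fun n : ℕ => (∑' k, ‖tt q (1 : ℂ) (k + 1)‖) * ‖(q : ℂ) ^ n * z‖)
        atTop (𝓝 0) := by
      simpa using hpow.const_mul (∑' k, ‖tt q (1 : ℂ) (k + 1)‖)
    refine squeeze_zero_norm' ?_ hg
    filter_upwards [hpow.eventually_le_const (by norm_num : (0 : ℝ) < 1)] with n hn
    exact F_sub_one hq hq1 hn
  have hqp : Tendsto (fun n : ℕ => qp z q n) atTop (𝓝 (qpi z q)) := by
    simpa [qp] using (hasProd_qpi hq hq1 z).tendsto_prod_nat
  have hmul := hqp.mul hF1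
  rw [mul_one] at hmul
  have hconst : (fun n : ℕ => qp z q n * ∑' k, tt q ((q : ℂ) ^ n * z) k)
      = fun _ : ℕ => ∑' k, tt q z k := by
    funext n; exact (iter hq hq1 z n).symm
  rw [hconst] at hmul
  exact tendsto_nhds_unique tendsto_const_nhds hmul
end

section
/- Let $0<q<1$ and $a,b$ with $ab<1$, $|a|>1$, and suppose $x_k = (a q^k + a^{-1} q^{-k})/2$ with $|aq^k|>1$. For the Al-Salam–Chihara polynomials $p_n(x;a,b|q)$, the diagonal Poisson kernel $P_t(x_k,x_k;a,b|q) = \sum_{n=0}^\infty t^n \frac{p_n(x_k;a,b|q)^2}{(q,ab;q)_n}$ has radius of convergence in $t$ equal to $a^2 q^{2k}$ (which is greater than 1). -/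
/-- The finite q-shifted factorial `(a;q)_k` (real version). -/
noncomputable def qpR (a q : ℝ) (k : ℕ) : ℝ := ∏ i ∈ Finset.range k, (1 - a * q ^ i)

open Finset

lemma qpR_pos {c q : ℝ} (hc : c < 1) (hq : 0 < q) (hq1 : q < 1) (n : ℕ) : 0 < qpR c q n := by
  refine Finset.prod_pos fun i _ => ?_
  have h1 : 0 < q ^ i := pow_pos hq i
  have h2 : q ^ i ≤ 1 := pow_le_one₀ hq.le hq1.le
  rcases le_or_gt c 0 with h | h
  · nlinarith
  · nlinarith

lemma geom_bound {q : ℝ} (hq : 0 ≤ q) (hq1 : q < 1) (n : ℕ) :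
    ∑ i ∈ Finset.range n, q ^ i ≤ 1 / (1 - q) := by
  rw [le_div_iff₀ (by linarith)]
  have h1 := geom_sum_mul q n
  nlinarith [pow_nonneg hq n]

lemma qpR_le_exp {c q : ℝ} (hc : c < 1) (hq : 0 < q) (hq1 : q < 1) (n : ℕ) :
    qpR c q n ≤ Real.exp (|c| / (1 - q)) := by
  have key : ∀ i : ℕ, (1 : ℝ) - c * q ^ i ≤ Real.exp (|c| * q ^ i) := by
    intro i
    have h1 : 0 < q ^ i := pow_pos hq i
    have h2 : (1 : ℝ) - c * q ^ i ≤ 1 + |c| * q ^ i := by nlinarith [neg_abs_le c]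
    refine h2.trans ?_
    have := Real.add_one_le_exp (|c| * q ^ i)
    linarith
  calc qpR c q n ≤ ∏ i ∈ Finset.range n, Real.exp (|c| * q ^ i) :=
        Finset.prod_le_prod (fun i _ => by
          have h1 : 0 < q ^ i := pow_pos hq i
          have h2 : q ^ i ≤ 1 := pow_le_one₀ hq.le hq1.le
          rcases le_or_gt c 0 with h | h
          · nlinarith
          · nlinarith) (fun i _ => key i)
    _ = Real.exp (∑ i ∈ Finset.range n, |c| * q ^ i) := (Real.exp_sum _ _).symm
    _ ≤ Real.exp (|c| / (1 - q)) := by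
        apply Real.exp_le_exp.mpr
        rw [← Finset.mul_sum]
        calc |c| * ∑ i ∈ Finset.range n, q ^ i ≤ |c| * (1 / (1 - q)) :=
              mul_le_mul_of_nonneg_left (geom_bound hq.le hq1 n) (abs_nonneg c)
          _ = |c| / (1 - q) := by ring

lemma prod_one_sub_ge {x : ℕ → ℝ} (hx0 : ∀ i, 0 ≤ x i) (hx1 : ∀ i, x i ≤ 1) (n : ℕ) :
    1 - ∑ i ∈ Finset.range n, x i ≤ ∏ i ∈ Finset.range n, (1 - x i) := by
  induction n with
  | zero => simp
  | succ n ih =>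
    rw [Finset.prod_range_succ, Finset.sum_range_succ]
    have h1 : 0 ≤ ∑ i ∈ Finset.range n, x i := Finset.sum_nonneg fun i _ => hx0 i
    nlinarith [hx0 n, hx1 n]

lemma qpR_lower {c q : ℝ} (hc : c < 1) (hq : 0 < q) (hq1 : q < 1) :
    ∃ δ : ℝ, 0 < δ ∧ ∀ n, δ ≤ qpR c q n := by
  rcases le_or_gt c 0 with h | h
  · refine ⟨1, one_pos, fun n => ?_⟩
    rw [qpR]
    have := Finset.prod_le_prod (s := Finset.range n) (f := fun _ : ℕ => (1:ℝ)) (g := fun i => 1 - c * q ^ i)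
      (fun i _ => by norm_num) (fun i hi => by
        show (1:ℝ) ≤ 1 - c * q ^ i
        nlinarith [mul_nonneg (neg_nonneg.mpr h) (pow_pos hq i).le])
    simpa using this
  · obtain ⟨m, hm⟩ := exists_pow_lt_of_lt_one (show (0:ℝ) < (1 - q) / (2 * c) from div_pos (by linarith) (by linarith)) hq1
    have hmpos : 0 < qpR c q m := qpR_pos hc hq hq1 m
    refine ⟨qpR c q m / 2, by linarith, fun n => ?_⟩
    rcases le_or_gt n m with hnm | hnm
    · -- qpR c q m ≤ qpR c q n since extra factors are ≤ 1
      obtain ⟨l, rfl⟩ := Nat.exists_eq_add_of_le hnm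
      have hsplit : qpR c q (n + l) = qpR c q n * ∏ i ∈ Finset.range l, (1 - c * q ^ (n + i)) := by
        rw [qpR, qpR, Finset.prod_range_add]
      have h2 : ∏ i ∈ Finset.range l, (1 - c * q ^ (n + i)) ≤ 1 := by
        refine Finset.prod_le_one (fun i _ => ?_) (fun i _ => ?_)
        · have h1 : 0 < q ^ (n + i) := pow_pos hq _
          have h2 : q ^ (n + i) ≤ 1 := pow_le_one₀ hq.le hq1.le
          nlinarith
        · nlinarith [pow_pos hq (n + i)]
      have hn : 0 < qpR c q n := qpR_pos hc hq hq1 n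
      nlinarith
    · -- n > m : qpR c q n = qpR c q m * (tail) with tail ≥ 1/2
      obtain ⟨l, rfl⟩ := Nat.exists_eq_add_of_le hnm.le
      have hsplit : qpR c q (m + l) = qpR c q m * ∏ i ∈ Finset.range l, (1 - c * q ^ (m + i)) := by
        rw [qpR, qpR, Finset.prod_range_add]
      have htail : (1:ℝ)/2 ≤ ∏ i ∈ Finset.range l, (1 - c * q ^ (m + i)) := by
        have heq : ∀ i ∈ Finset.range l, (1 - c * q ^ (m + i)) = 1 - (c * q ^ m) * q ^ i := by
          intro i _; rw [pow_add]; ring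
        rw [Finset.prod_congr rfl heq]
        have h0 : ∀ i : ℕ, 0 ≤ (c * q ^ m) * q ^ i := fun i => by positivity
        have h1 : ∀ i : ℕ, (c * q ^ m) * q ^ i ≤ 1 := by
          intro i
          have hqi : q ^ i ≤ 1 := pow_le_one₀ hq.le hq1.le
          have hqm : q ^ m ≤ 1 := pow_le_one₀ hq.le hq1.le
          have h2 : q ^ m * q ^ i ≤ 1 := by nlinarith [pow_pos hq m, pow_pos hq i]
          nlinarith [pow_pos hq m, pow_pos hq i]
        refine le_trans ?_ (prod_one_sub_ge h0 h1 l)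
        have hsum : ∑ i ∈ Finset.range l, (c * q ^ m) * q ^ i ≤ (c * q ^ m) * (1 / (1 - q)) := by
          rw [← Finset.mul_sum]
          exact mul_le_mul_of_nonneg_left (geom_bound hq.le hq1 l) (by positivity)
        have h1q : (0:ℝ) < 1 - q := by linarith
        have : (c * q ^ m) * (1 / (1 - q)) ≤ 1/2 := by
          rw [lt_div_iff₀ (by positivity)] at hm
          rw [mul_one_div, div_le_div_iff₀ h1q two_pos]
          nlinarith
        linarith
      nlinarith


/-- The Al-Salam–Chihara polynomial evaluated at the discrete mass point
`x_k = (aq^k + a⁻¹q^{-k})/2`, i.e. with `e^{iθ} = aq^k`, so that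
`ae^{iθ} = a²q^k` and `ae^{-iθ} = q^{-k}`. -/
noncomputable def ascMass (q a b : ℝ) (k n : ℕ) : ℝ :=
  a⁻¹ ^ n * qpR (a * b) q n *
    ∑ j ∈ Finset.range (n + 1),
      qpR (q⁻¹ ^ n) q j * qpR (a ^ 2 * q ^ k) q j * qpR (q⁻¹ ^ k) q j /
        (qpR q q j * qpR (a * b) q j) * q ^ j

section main
variable {q a b : ℝ} (hq : 0 < q) (hq1 : q < 1) (hab : a * b < 1)
  (ha : 1 < |a|) (k : ℕ) (hk : 1 < |a| * q ^ k)

/-- the inner summand -/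
noncomputable def gg (q a b : ℝ) (k n j : ℕ) : ℝ :=
  qpR (q⁻¹ ^ n) q j * qpR (a ^ 2 * q ^ k) q j * qpR (q⁻¹ ^ k) q j /
    (qpR q q j * qpR (a * b) q j) * q ^ j

/-- the constant part -/
noncomputable def AA (q a b : ℝ) (k j : ℕ) : ℝ :=
  |qpR (a ^ 2 * q ^ k) q j| * |qpR (q⁻¹ ^ k) q j| /
    (qpR q q j * qpR (a * b) q j) * q ^ j

lemma gg_eq_zero (hq : 0 < q) (n : ℕ) {j : ℕ} (hj : k < j) : gg q a b k n j = 0 := by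
  have h0 : qpR (q⁻¹ ^ k) q j = 0 := by
    refine Finset.prod_eq_zero (Finset.mem_range.mpr hj) ?_
    have : q⁻¹ ^ k * q ^ k = 1 := by
      rw [← mul_pow, inv_mul_cancel₀ hq.ne', one_pow]
    rw [this]; ring
  unfold gg; rw [h0, mul_zero, zero_div, zero_mul]

include hab hq1 in
lemma den_pos (hq : 0 < q) (j : ℕ) : 0 < qpR q q j * qpR (a * b) q j :=
  mul_pos (qpR_pos hq1 hq hq1 j) (qpR_pos hab hq hq1 j)

include hab hq1 in
lemma AA_nonneg (hq : 0 < q) (j : ℕ) : 0 ≤ AA q a b k j := by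
  have := den_pos hq1 hab hq j
  have := pow_pos hq j
  unfold AA
  positivity

include hab hq1 in
lemma abs_gg (hq : 0 < q) (n j : ℕ) :
    |gg q a b k n j| = |qpR (q⁻¹ ^ n) q j| * AA q a b k j := by
  have hd := den_pos hq1 hab hq j
  have hp := pow_pos hq j
  rw [gg, AA, abs_mul, abs_div, abs_mul, abs_mul, abs_of_pos hd, abs_of_pos hp]
  ring

include hq1 in
lemma qpR_inv_ub (hq : 0 < q) {n j : ℕ} (hj : j ≤ n) :
    |qpR (q⁻¹ ^ n) q j| ≤ ((q ^ n)⁻¹) ^ j := by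
  rw [qpR, Finset.abs_prod]
  have : ((q ^ n)⁻¹) ^ j = ∏ _i ∈ Finset.range j, (q ^ n)⁻¹ := by
    rw [Finset.prod_const, Finset.card_range]
  rw [this]
  refine Finset.prod_le_prod (fun i _ => abs_nonneg _) (fun i hi => ?_)
  have hin : i ≤ n := le_trans (Nat.le_of_lt_succ (Nat.lt_succ_of_lt (Finset.mem_range.mp hi))) hj
  have hqn : 0 < q ^ n := pow_pos hq n
  have h1 : (1:ℝ) ≤ q⁻¹ ^ n * q ^ i := by
    rw [inv_pow, ← div_eq_inv_mul, le_div_iff₀ hqn, one_mul]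
    exact pow_le_pow_of_le_one hq.le hq1.le hin
  have h2 : q⁻¹ ^ n * q ^ i ≤ (q ^ n)⁻¹ := by
    rw [inv_pow]
    have : q ^ i ≤ 1 := pow_le_one₀ hq.le hq1.le
    nlinarith [inv_pos.mpr hqn]
  rw [abs_of_nonpos (by linarith)]
  linarith

include hq1 in
lemma qpR_inv_lb (hq : 0 < q) {n : ℕ} (hn : k ≤ n) :
    (q ^ k * (1 - q)) ^ k * ((q ^ n)⁻¹) ^ k ≤ |qpR (q⁻¹ ^ n) q k| := by
  rw [qpR, Finset.abs_prod]
  have hqn : 0 < q ^ n := pow_pos hq n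
  have : (q ^ k * (1 - q)) ^ k * ((q ^ n)⁻¹) ^ k
      = ∏ _i ∈ Finset.range k, (q ^ k * (1 - q) * (q ^ n)⁻¹) := by
    rw [Finset.prod_const, Finset.card_range, ← mul_pow]
  rw [this]
  refine Finset.prod_le_prod
    (fun i _ => by have h1q : (0:ℝ) < 1 - q := sub_pos.mpr hq1; positivity) (fun i hi => ?_)
  have hik : i < k := Finset.mem_range.mp hi
  have hin : i < n := lt_of_lt_of_le hik hn
  have h1 : (1:ℝ) ≤ q⁻¹ ^ n * q ^ i := by
    rw [inv_pow, ← div_eq_inv_mul, le_div_iff₀ hqn, one_mul]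
    exact pow_le_pow_of_le_one hq.le hq1.le hin.le
  rw [abs_of_nonpos (by linarith), neg_sub]
  -- goal : q^k * (1-q) * (q^n)⁻¹ ≤ q⁻¹^n * q^i - 1
  have e1 : q ^ i * q ^ (n - i) = q ^ n := by rw [← pow_add, Nat.add_sub_cancel' hin.le]
  have e2 : q⁻¹ ^ n * q ^ i - 1 = q ^ i * (q ^ n)⁻¹ * (1 - q ^ (n - i)) := by
    rw [inv_pow]
    field_simp
    nlinarith [e1]
  rw [e2]
  have hqi : q ^ k ≤ q ^ i := pow_le_pow_of_le_one hq.le hq1.le hik.le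
  have hni : q ^ (n - i) ≤ q := by
    calc q ^ (n - i) ≤ q ^ 1 := pow_le_pow_of_le_one hq.le hq1.le (by omega)
      _ = q := pow_one q
  have hinv : 0 < (q ^ n)⁻¹ := inv_pos.mpr hqn
  nlinarith [mul_nonneg (mul_nonneg (sub_nonneg.mpr hqi) hinv.le) (by nlinarith [pow_le_one₀ hq.le hq1.le (n := n - i)] : (0:ℝ) ≤ 1 - q ^ (n - i)),
    mul_nonneg (mul_nonneg (pow_pos hq k).le hinv.le) (sub_nonneg.mpr hni)]

include hq1 hab ha hk in
lemma AA_k_pos (hq : 0 < q) : 0 < AA q a b k k := by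
  have h1 : qpR (a ^ 2 * q ^ k) q k ≠ 0 := by
    rw [qpR]
    refine Finset.prod_ne_zero_iff.mpr fun i hi => ?_
    have hik : i < k := Finset.mem_range.mp hi
    have hq1' : 1 < |a| * q ^ i :=
      lt_of_lt_of_le hk (mul_le_mul_of_nonneg_left
        (pow_le_pow_of_le_one hq.le hq1.le hik.le) (abs_nonneg a))
    have ha2 : a ^ 2 = |a| * |a| := by rw [← sq_abs]; ring
    have : 1 < a ^ 2 * q ^ k * q ^ i := by
      rw [ha2]
      nlinarith [abs_nonneg a, pow_pos hq k, pow_pos hq i]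
    intro hcon
    rw [sub_eq_zero] at hcon
    rw [← hcon] at this
    exact lt_irrefl _ this
  have h2 : qpR (q⁻¹ ^ k) q k ≠ 0 := by
    rw [qpR]
    refine Finset.prod_ne_zero_iff.mpr fun i hi => ?_
    have hik : i < k := Finset.mem_range.mp hi
    have hlt : q ^ k < q ^ i := pow_lt_pow_right_of_lt_one₀ hq hq1 hik
    have hqk : 0 < q ^ k := pow_pos hq k
    have : 1 < q⁻¹ ^ k * q ^ i := by
      rw [inv_pow, ← div_eq_inv_mul, lt_div_iff₀ hqk, one_mul]
      exact hlt
    intro hcon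
    rw [sub_eq_zero] at hcon
    rw [← hcon] at this
    exact lt_irrefl _ this
  have hd := den_pos hq1 hab hq k
  have hp := pow_pos hq k
  have a1 := abs_pos.mpr h1
  have a2 := abs_pos.mpr h2
  unfold AA
  positivity

include hq1 hab in
lemma ite_sum_ub (hq : 0 < q) (s : Finset ℕ) :
    (∑ j ∈ s, (if j ≤ k then AA q a b k j else 0)) ≤ ∑ j ∈ Finset.range (k+1), AA q a b k j := by
  rw [← Finset.sum_filter]
  refine Finset.sum_le_sum_of_subset_of_nonneg ?_ (fun j _ _ => AA_nonneg hq1 hab k hq j)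
  intro j hj
  rw [Finset.mem_filter] at hj
  exact Finset.mem_range.mpr (Nat.lt_succ_of_le hj.2)

include hq1 hab in
lemma gg_term_bound (hq : 0 < q) (n : ℕ) {j : ℕ} (hj : j ≤ n) :
    q ^ (n*k) * |gg q a b k n j| ≤
      (if j ≤ k then (q ^ n) ^ (k - j) * AA q a b k j else 0) := by
  split_ifs with h
  · have hb : |gg q a b k n j| ≤ ((q ^ n)⁻¹) ^ j * AA q a b k j := by
      rw [abs_gg hq1 hab k hq n j]
      exact mul_le_mul_of_nonneg_right (qpR_inv_ub hq1 hq hj) (AA_nonneg hq1 hab k hq j)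
    have e : q ^ (n*k) * (((q ^ n)⁻¹) ^ j) = (q ^ n) ^ (k - j) := by
      rw [pow_mul, inv_pow, pow_sub₀ _ (pow_ne_zero n hq.ne') h]
    calc q ^ (n*k) * |gg q a b k n j| ≤ q ^ (n*k) * (((q ^ n)⁻¹) ^ j * AA q a b k j) :=
          mul_le_mul_of_nonneg_left hb (pow_nonneg hq.le _)
      _ = (q ^ n) ^ (k - j) * AA q a b k j := by rw [← mul_assoc, e]
  · rw [gg_eq_zero k hq n (by omega), abs_zero, mul_zero]

include hq1 hab in
lemma sum_ub (hq : 0 < q) (n : ℕ) :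
    q ^ (n*k) * |∑ j ∈ Finset.range (n+1), gg q a b k n j| ≤
      ∑ j ∈ Finset.range (k+1), AA q a b k j := by
  calc q ^ (n*k) * |∑ j ∈ Finset.range (n+1), gg q a b k n j|
      ≤ q ^ (n*k) * ∑ j ∈ Finset.range (n+1), |gg q a b k n j| :=
        mul_le_mul_of_nonneg_left (Finset.abs_sum_le_sum_abs _ _) (pow_nonneg hq.le _)
    _ = ∑ j ∈ Finset.range (n+1), q ^ (n*k) * |gg q a b k n j| := Finset.mul_sum _ _ _
    _ ≤ ∑ j ∈ Finset.range (n+1), (if j ≤ k then AA q a b k j else 0) := by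
        refine Finset.sum_le_sum fun j hj => ?_
        have hj' : j ≤ n := Nat.lt_succ_iff.mp (Finset.mem_range.mp hj)
        refine le_trans (gg_term_bound hq1 hab k hq n hj') ?_
        split_ifs with h
        · exact mul_le_of_le_one_left (AA_nonneg hq1 hab k hq j)
            (pow_le_one₀ (pow_nonneg hq.le n) (pow_le_one₀ hq.le hq1.le))
        · exact le_refl 0
    _ ≤ _ := ite_sum_ub hq1 hab k hq _

include hq1 hab in
lemma sum_lb (hq : 0 < q) {n : ℕ} (hn : k ≤ n) :
    (q ^ k * (1 - q)) ^ k * AA q a b k k - q ^ n * (∑ j ∈ Finset.range (k+1), AA q a b k j) ≤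
      q ^ (n*k) * |∑ j ∈ Finset.range (n+1), gg q a b k n j| := by
  have hmem : k ∈ Finset.range (n+1) := Finset.mem_range.mpr (Nat.lt_succ_of_le hn)
  have hqnk : (0:ℝ) ≤ q ^ (n*k) := (pow_pos hq _).le
  -- lower bound on the k-th term
  have h1 : (q ^ k * (1 - q)) ^ k * AA q a b k k ≤ q ^ (n*k) * |gg q a b k n k| := by
    have hb : ((q ^ k * (1 - q)) ^ k * ((q ^ n)⁻¹) ^ k) * AA q a b k k ≤ |gg q a b k n k| := by
      rw [abs_gg hq1 hab k hq n k]
      exact mul_le_mul_of_nonneg_right (qpR_inv_lb hq1 k hq hn) (AA_nonneg hq1 hab k hq k)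
    have e : q ^ (n*k) * (((q ^ n)⁻¹) ^ k) = 1 := by
      rw [pow_mul, inv_pow, mul_inv_cancel₀ (pow_ne_zero _ (pow_ne_zero n hq.ne'))]
    calc (q ^ k * (1 - q)) ^ k * AA q a b k k
        = q ^ (n*k) * (((q ^ k * (1 - q)) ^ k * ((q ^ n)⁻¹) ^ k) * AA q a b k k) := by
          rw [show q ^ (n*k) * (((q ^ k * (1 - q)) ^ k * ((q ^ n)⁻¹) ^ k) * AA q a b k k)
              = (q ^ (n*k) * (((q ^ n)⁻¹) ^ k)) * ((q ^ k * (1 - q)) ^ k * AA q a b k k) by ring,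
            e, one_mul]
      _ ≤ q ^ (n*k) * |gg q a b k n k| := mul_le_mul_of_nonneg_left hb hqnk
  -- upper bound on the other terms
  have h2 : q ^ (n*k) * (∑ j ∈ (Finset.range (n+1)).erase k, |gg q a b k n j|) ≤
      q ^ n * (∑ j ∈ Finset.range (k+1), AA q a b k j) := by
    calc q ^ (n*k) * (∑ j ∈ (Finset.range (n+1)).erase k, |gg q a b k n j|)
        = ∑ j ∈ (Finset.range (n+1)).erase k, q ^ (n*k) * |gg q a b k n j| := Finset.mul_sum _ _ _
      _ ≤ ∑ j ∈ (Finset.range (n+1)).erase k, (if j ≤ k then q ^ n * AA q a b k j else 0) := by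
          refine Finset.sum_le_sum fun j hj => ?_
          have hjk : j ≠ k := Finset.ne_of_mem_erase hj
          have hj' : j ≤ n := Nat.lt_succ_iff.mp (Finset.mem_range.mp (Finset.mem_of_mem_erase hj))
          refine le_trans (gg_term_bound hq1 hab k hq n hj') ?_
          split_ifs with h
          · refine mul_le_mul_of_nonneg_right ?_ (AA_nonneg hq1 hab k hq j)
            calc (q ^ n) ^ (k - j) ≤ (q ^ n) ^ 1 :=
                  pow_le_pow_of_le_one (pow_nonneg hq.le n)
                    (pow_le_one₀ hq.le hq1.le) (by omega)
              _ = q ^ n := pow_one _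
          · exact le_refl 0
      _ = q ^ n * ∑ j ∈ (Finset.range (n+1)).erase k, (if j ≤ k then AA q a b k j else 0) := by
          rw [Finset.mul_sum]
          exact Finset.sum_congr rfl fun j _ => by split_ifs <;> ring
      _ ≤ q ^ n * (∑ j ∈ Finset.range (k+1), AA q a b k j) :=
          mul_le_mul_of_nonneg_left (ite_sum_ub hq1 hab k hq _) (pow_pos hq n).le
  -- triangle inequality
  have hsplit : ∑ j ∈ Finset.range (n+1), gg q a b k n j
      = gg q a b k n k + ∑ j ∈ (Finset.range (n+1)).erase k, gg q a b k n j :=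
    (Finset.add_sum_erase _ _ hmem).symm
  have h3 : |gg q a b k n k| - (∑ j ∈ (Finset.range (n+1)).erase k, |gg q a b k n j|) ≤
      |∑ j ∈ Finset.range (n+1), gg q a b k n j| := by
    have t1 : |gg q a b k n k| ≤ |∑ j ∈ Finset.range (n+1), gg q a b k n j| +
        |∑ j ∈ (Finset.range (n+1)).erase k, gg q a b k n j| := by
      calc |gg q a b k n k| = |(∑ j ∈ Finset.range (n+1), gg q a b k n j) -
            ∑ j ∈ (Finset.range (n+1)).erase k, gg q a b k n j| := by rw [hsplit]; ring_nf
        _ ≤ _ := abs_sub _ _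
    have t2 : |∑ j ∈ (Finset.range (n+1)).erase k, gg q a b k n j| ≤
        ∑ j ∈ (Finset.range (n+1)).erase k, |gg q a b k n j| := Finset.abs_sum_le_sum_abs _ _
    linarith
  have h4 := mul_le_mul_of_nonneg_left h3 hqnk
  rw [mul_sub] at h4
  linarith

end main


set_option maxHeartbeats 1000000 in
/-- At the discrete mass point `x_k`, the diagonal Poisson kernel
`P_t(x_k,x_k;a,b|q) = ∑ tⁿ pₙ(x_k)²/((q;q)ₙ(ab;q)ₙ)` has radius of convergence
in `t` equal to `a²q^{2k}`, which is greater than `1`. -/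
theorem stmt14 (q a b : ℝ) (hq : 0 < q) (hq1 : q < 1) (hab : a * b < 1)
    (ha : 1 < |a|) (k : ℕ) (hk : 1 < |a| * q ^ k) :
    (∀ t : ℝ, |t| < a ^ 2 * q ^ (2 * k) →
      Summable (fun n : ℕ => (ascMass q a b k n) ^ 2 / (qpR q q n * qpR (a * b) q n) * t ^ n)) ∧
    (∀ t : ℝ, a ^ 2 * q ^ (2 * k) < |t| →
      ¬ Summable (fun n : ℕ => (ascMass q a b k n) ^ 2 / (qpR q q n * qpR (a * b) q n) * t ^ n)) ∧
    1 < a ^ 2 * q ^ (2 * k) := by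
  have ha0 : a ≠ 0 := by
    intro h
    rw [h, abs_zero] at ha
    linarith
  have hr1 : 1 < a ^ 2 * q ^ (2 * k) := by
    have e : a ^ 2 * q ^ (2 * k) = (|a| * q ^ k) ^ 2 := by
      rw [mul_pow, sq_abs, ← pow_mul, mul_comm k 2]
    rw [e]
    nlinarith
  set r : ℝ := a ^ 2 * q ^ (2 * k) with hr
  have hr_pos : 0 < r := lt_trans one_pos hr1
  set SA : ℝ := ∑ j ∈ Finset.range (k + 1), AA q a b k j with hSA
  have hSA_pos : 0 < SA :=
    Finset.sum_pos' (fun j _ => AA_nonneg hq1 hab k hq j)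
      ⟨k, Finset.mem_range.mpr (Nat.lt_succ_self k), AA_k_pos hq1 hab ha k hk hq⟩
  obtain ⟨dq, hdq, hdqle⟩ := qpR_lower hq1 hq hq1
  obtain ⟨dab, hdab, hdable⟩ := qpR_lower hab hq hq1
  set E : ℝ := Real.exp (|a * b| / (1 - q)) with hE
  have hE_pos : 0 < E := Real.exp_pos _
  have hEab : ∀ n, qpR (a * b) q n ≤ E := fun n => qpR_le_exp hab hq hq1 n
  have hqle1 : ∀ n, qpR q q n ≤ 1 := by
    intro n
    rw [qpR]
    refine Finset.prod_le_one (fun i _ => ?_) (fun i _ => ?_)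
    · have h1 : q ^ i ≤ 1 := pow_le_one₀ hq.le hq1.le
      nlinarith [pow_pos hq i]
    · nlinarith [pow_pos hq i]
  have hden_pos : ∀ n, 0 < qpR q q n * qpR (a * b) q n := den_pos hq1 hab hq
  have hden_lb : ∀ n, dq * dab ≤ qpR q q n * qpR (a * b) q n := fun n =>
    mul_le_mul (hdqle n) (hdable n) hdab.le (qpR_pos hq1 hq hq1 n).le
  have hden_ub : ∀ n, qpR q q n * qpR (a * b) q n ≤ E := fun n => by
    calc qpR q q n * qpR (a * b) q n ≤ 1 * E :=
          mul_le_mul (hqle1 n) (hEab n) (qpR_pos hab hq hq1 n).le one_pos.le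
      _ = E := one_mul E
  set S : ℕ → ℝ := fun n => ∑ j ∈ Finset.range (n + 1), gg q a b k n j with hS
  have hmass : ∀ n, ascMass q a b k n = a⁻¹ ^ n * qpR (a * b) q n * S n := fun n => rfl
  set T : ℕ → ℝ := fun n => q ^ (n * k) * |S n| with hT
  have hT_nonneg : ∀ n, 0 ≤ T n := fun n => mul_nonneg (pow_nonneg hq.le _) (abs_nonneg _)
  have hT_ub : ∀ n, T n ≤ SA := fun n => sum_ub hq1 hab k hq n
  set c0 : ℝ := (q ^ k * (1 - q)) ^ k * AA q a b k k with hc0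
  have hc0_pos : 0 < c0 := by
    have h1 : (0:ℝ) < 1 - q := by linarith
    have h2 := AA_k_pos hq1 hab ha k hk hq
    positivity
  have hT_lb : ∀ n, k ≤ n → c0 - q ^ n * SA ≤ T n := fun n hn => sum_lb hq1 hab k hq hn
  -- the square identity
  have key : ∀ n, (ascMass q a b k n) ^ 2 = (qpR (a * b) q n * T n) ^ 2 / r ^ n := by
    intro n
    rw [eq_div_iff (pow_ne_zero n hr_pos.ne')]
    have e2 : (a⁻¹ ^ n) ^ 2 * r ^ n = (q ^ (n * k)) ^ 2 := by
      have hcomm : ((a⁻¹ : ℝ) ^ n) ^ 2 = (a⁻¹ ^ 2) ^ n := by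
        rw [← pow_mul, ← pow_mul, mul_comm]
      have h1 : (a⁻¹ ^ n) ^ 2 * r ^ n = (a⁻¹ ^ 2 * r) ^ n := by
        rw [hcomm, ← mul_pow]
      have h2 : a⁻¹ ^ 2 * r = q ^ (2 * k) := by
        rw [hr]
        field_simp
      rw [h1, h2, ← pow_mul, ← pow_mul]
      congr 1
      ring
    have e1 : (qpR (a * b) q n * T n) ^ 2
        = (qpR (a * b) q n) ^ 2 * ((q ^ (n * k)) ^ 2 * (S n) ^ 2) := by
      rw [hT]
      rw [mul_pow, mul_pow, sq_abs]
    rw [hmass n, e1]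
    calc (a⁻¹ ^ n * qpR (a * b) q n * S n) ^ 2 * r ^ n
        = ((a⁻¹ ^ n) ^ 2 * r ^ n) * ((qpR (a * b) q n) ^ 2 * (S n) ^ 2) := by ring
      _ = (qpR (a * b) q n) ^ 2 * ((q ^ (n * k)) ^ 2 * (S n) ^ 2) := by rw [e2]; ring
  -- identity for the absolute value of the terms
  have hid : ∀ (t : ℝ) (n : ℕ),
      |(ascMass q a b k n) ^ 2 / (qpR q q n * qpR (a * b) q n) * t ^ n|
        = (qpR (a * b) q n * T n) ^ 2 / (qpR q q n * qpR (a * b) q n) * (|t| / r) ^ n := by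
    intro t n
    rw [abs_mul, abs_div, abs_of_pos (hden_pos n), abs_of_nonneg (sq_nonneg _), abs_pow,
      key n, div_pow]
    field_simp
  refine ⟨?_, ?_, hr1⟩
  · -- summable for |t| < r
    intro t ht
    have hρ : |t| / r < 1 := (div_lt_one hr_pos).mpr ht
    have hρ0 : 0 ≤ |t| / r := div_nonneg (abs_nonneg t) hr_pos.le
    refine Summable.of_norm_bounded (g := fun n => (E * SA) ^ 2 / (dq * dab) * (|t| / r) ^ n)
      ((summable_geometric_of_lt_one hρ0 hρ).mul_left _) (fun n => ?_)
    rw [Real.norm_eq_abs, hid t n]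
    have hnum : (qpR (a * b) q n * T n) ^ 2 ≤ (E * SA) ^ 2 := by
      have h1 : 0 ≤ qpR (a * b) q n * T n :=
        mul_nonneg (qpR_pos hab hq hq1 n).le (hT_nonneg n)
      have h2 : qpR (a * b) q n * T n ≤ E * SA :=
        mul_le_mul (hEab n) (hT_ub n) (hT_nonneg n) hE_pos.le
      nlinarith
    refine mul_le_mul_of_nonneg_right ?_ (pow_nonneg hρ0 n)
    exact div_le_div₀ (sq_nonneg _) hnum (mul_pos hdq hdab) (hden_lb n)
  · -- not summable for |t| > r
    intro t ht hsum
    have hρ : 1 < |t| / r := (one_lt_div hr_pos).mpr ht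
    obtain ⟨N0, hN0⟩ := exists_pow_lt_of_lt_one
      (div_pos hc0_pos (by linarith : (0:ℝ) < 2 * SA)) hq1
    set N := max N0 k with hN
    set c' : ℝ := (dab * (c0 / 2)) ^ 2 / E with hc'
    have hc'_pos : 0 < c' :=
      div_pos (pow_pos (mul_pos hdab (by linarith : (0:ℝ) < c0 / 2)) 2) hE_pos
    have hlow : ∀ n, N ≤ n →
        c' ≤ |(ascMass q a b k n) ^ 2 / (qpR q q n * qpR (a * b) q n) * t ^ n| := by
      intro n hn
      have hnk : k ≤ n := le_trans (le_max_right _ _) hn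
      have hqn : q ^ n ≤ q ^ N0 :=
        pow_le_pow_of_le_one hq.le hq1.le (le_trans (le_max_left _ _) hn)
      have hTlb : c0 / 2 ≤ T n := by
        have h1 := hT_lb n hnk
        have h2 : q ^ n * SA ≤ c0 / 2 := by
          have h3 : q ^ n < c0 / (2 * SA) := lt_of_le_of_lt hqn hN0
          rw [lt_div_iff₀ (by linarith : (0:ℝ) < 2 * SA)] at h3
          nlinarith
        linarith
      rw [hid t n]
      have hnum : (dab * (c0 / 2)) ^ 2 ≤ (qpR (a * b) q n * T n) ^ 2 := by
        have h1 : (0:ℝ) ≤ dab * (c0 / 2) := (mul_pos hdab (by linarith : (0:ℝ) < c0 / 2)).le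
        have h2 : dab * (c0 / 2) ≤ qpR (a * b) q n * T n :=
          mul_le_mul (hdable n) hTlb (by linarith : (0:ℝ) ≤ c0 / 2) (qpR_pos hab hq hq1 n).le
        nlinarith
      have hρn : 1 ≤ (|t| / r) ^ n := one_le_pow₀ hρ.le
      calc c' = (dab * (c0 / 2)) ^ 2 / E * 1 := (mul_one _).symm
        _ ≤ (qpR (a * b) q n * T n) ^ 2 / (qpR q q n * qpR (a * b) q n) * (|t| / r) ^ n := by
            refine mul_le_mul ?_ hρn zero_le_one ?_
            · exact div_le_div₀ (sq_nonneg _) hnum (hden_pos n) (hden_ub n)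
            · exact div_nonneg (sq_nonneg _) (hden_pos n).le
    have h0 : Filter.Tendsto
        (fun n => |(ascMass q a b k n) ^ 2 / (qpR q q n * qpR (a * b) q n) * t ^ n|)
        Filter.atTop (nhds 0) := by
      simpa using hsum.tendsto_atTop_zero.abs
    have hev := h0.eventually_lt_const hc'_pos
    obtain ⟨n, hn1, hn2⟩ := (hev.and (Filter.eventually_ge_atTop N)).exists
    exact absurd (hlow n hn2) (not_le.mpr hn1)
end
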